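/- arXiv:1602.07440 — 3 statements merged into one kernel-verified Lean document; each statement's English description precedes it below -/
import Mathlib

section
/- If Z₁ and Z₂ are positive random variables with E[(log Z₁)²] < ∞ and E[(log Z₂)²] < ∞, then Cov(log Z₁, log Z₂) = ∫₀^∞ ∫₀^∞ ( P(Z₁ > r, Z₂ > s) − P(Z₁ > r) P(Z₂ > s) ) (ds/s)(dr/r). -/
open MeasureTheory

namespace St4

lemma fun_eq {a b : ℝ} (hba : b ≤ a) :
    (fun r => ((if r < a then (1:ℝ) else 0) - (if r < b then (1:ℝ) else 0)) / r)
      = (Set.Ico b a).indicator (fun x => 1 / x) := by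
  funext r
  by_cases h1 : r < b
  · have h2 : r < a := lt_of_lt_of_le h1 hba
    simp [Set.indicator_apply, Set.mem_Ico, h1, h2, not_le.mpr h1]
  · by_cases h2 : r < a
    · simp [Set.indicator_apply, Set.mem_Ico, h1, h2, not_lt.mp h1]
    · simp [Set.indicator_apply, Set.mem_Ico, h1, h2]

lemma integrableOn_Ico {a b : ℝ} (hb : 0 < b) :
    IntegrableOn (fun x => 1 / x) (Set.Ico b a) volume := by
  have hc : ContinuousOn (fun x : ℝ => 1 / x) (Set.Icc b a) := by
    apply ContinuousOn.div continuousOn_const continuousOn_id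
    intro x hx
    exact (lt_of_lt_of_le hb hx.1).ne'
  exact hc.integrableOn_Icc.mono_set Set.Ico_subset_Icc_self

lemma ind_integral {a b : ℝ} (hb : 0 < b) (hba : b ≤ a) :
    ∫ r in Set.Ioi (0:ℝ), (Set.Ico b a).indicator (fun x => 1 / x) r
      = Real.log a - Real.log b := by
  have ha : 0 < a := lt_of_lt_of_le hb hba
  rw [integral_indicator measurableSet_Ico, Measure.restrict_restrict measurableSet_Ico]
  have hsub : Set.Ico b a ∩ Set.Ioi (0:ℝ) = Set.Ico b a := by
    apply Set.inter_eq_self_of_subset_left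
    intro x hx
    exact lt_of_lt_of_le hb hx.1
  rw [hsub, MeasureTheory.integral_Ico_eq_integral_Ioo, ← MeasureTheory.integral_Ioc_eq_integral_Ioo, ← intervalIntegral.integral_of_le hba,
    integral_one_div (Set.notMem_uIcc_of_lt hb ha),
    Real.log_div ha.ne' hb.ne']

lemma abs_fun_eq {a b : ℝ} (hb : 0 < b) (hba : b ≤ a) :
    (fun r => |((if r < a then (1:ℝ) else 0) - (if r < b then (1:ℝ) else 0)) / r|)
      = (Set.Ico b a).indicator (fun x => 1 / x) := by
  funext r
  rw [congrFun (fun_eq hba) r]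
  by_cases h : r ∈ Set.Ico b a
  · rw [Set.indicator_of_mem h]
    have hr : 0 < r := lt_of_lt_of_le hb h.1
    exact abs_of_nonneg (by positivity)
  · simp [Set.indicator_of_notMem h]

lemma D_neg (a b : ℝ) :
    (fun r => ((if r < a then (1:ℝ) else 0) - (if r < b then (1:ℝ) else 0)) / r)
      = fun r => -(((if r < b then (1:ℝ) else 0) - (if r < a then (1:ℝ) else 0)) / r) := by
  funext r; ring

lemma D_integrable {a b : ℝ} (ha : 0 < a) (hb : 0 < b) :
    Integrable (fun r => ((if r < a then (1:ℝ) else 0) - (if r < b then (1:ℝ) else 0)) / r)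
      (volume.restrict (Set.Ioi 0)) := by
  rcases le_total b a with h | h
  · rw [fun_eq h]
    exact ((integrableOn_Ico hb).integrable_indicator measurableSet_Ico).mono_measure
      Measure.restrict_le_self
  · rw [D_neg]
    apply Integrable.neg
    rw [fun_eq h]
    exact ((integrableOn_Ico ha).integrable_indicator measurableSet_Ico).mono_measure
      Measure.restrict_le_self

lemma D_integral {a b : ℝ} (ha : 0 < a) (hb : 0 < b) :
    (∫ r in Set.Ioi (0:ℝ), ((if r < a then (1:ℝ) else 0) - (if r < b then (1:ℝ) else 0)) / r)
      = Real.log a - Real.log b := by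
  rcases le_total b a with h | h
  · rw [fun_eq h]; exact ind_integral hb h
  · rw [D_neg, integral_neg, fun_eq h, ind_integral ha h]
    ring

lemma D_abs_integral {a b : ℝ} (ha : 0 < a) (hb : 0 < b) :
    (∫ r in Set.Ioi (0:ℝ), |((if r < a then (1:ℝ) else 0) - (if r < b then (1:ℝ) else 0)) / r|)
      = |Real.log a - Real.log b| := by
  rcases le_total b a with h | h
  · rw [abs_fun_eq hb h, ind_integral hb h]
    exact (abs_of_nonneg (sub_nonneg.2 (Real.log_le_log hb h))).symm
  · have h1 : (fun r => |((if r < a then (1:ℝ) else 0) - (if r < b then (1:ℝ) else 0)) / r|)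
        = fun r => |((if r < b then (1:ℝ) else 0) - (if r < a then (1:ℝ) else 0)) / r| := by
      funext r
      rw [congrFun (D_neg a b) r, abs_neg]
    rw [h1, abs_fun_eq ha h, ind_integral ha h, abs_sub_comm]
    exact (abs_of_nonneg (sub_nonneg.2 (Real.log_le_log ha h))).symm

end St4
namespace St4

lemma int_ind {Ω : Type*} [MeasurableSpace Ω] (P : Measure Ω) [IsProbabilityMeasure P]
    {c : Ω → Prop} [DecidablePred c] (hs : MeasurableSet {ω | c ω}) :
    Integrable (fun ω => if c ω then (1:ℝ) else 0) P ∧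
      ∫ ω, (if c ω then (1:ℝ) else 0) ∂P = (P {ω | c ω}).toReal := by
  have he : (fun ω => if c ω then (1:ℝ) else 0)
      = Set.indicator {ω | c ω} (fun _ => (1:ℝ)) := by
    funext ω
    by_cases h : c ω <;> simp [Set.indicator_apply, Set.mem_setOf_eq, h]
  constructor
  · rw [he]
    exact (integrable_const (1:ℝ)).indicator hs
  · rw [he, integral_indicator_const (1:ℝ) hs]
    simp
    rfl

lemma int_mul {α : Type*} [MeasurableSpace α] {μ : Measure α} {f g : α → ℝ}
    (hfm : AEStronglyMeasurable f μ) (hgm : AEStronglyMeasurable g μ)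
    (hf : Integrable (fun x => f x ^ 2) μ) (hg : Integrable (fun x => g x ^ 2) μ) :
    Integrable (fun x => f x * g x) μ := by
  have hb : Integrable (fun x => (1/2 : ℝ) * (f x ^ 2 + g x ^ 2)) μ := (hf.add hg).const_mul _
  refine hb.mono' (hfm.mul hgm) ?_
  filter_upwards with x
  rw [Real.norm_eq_abs, abs_mul]
  nlinarith [sq_nonneg (|f x| - |g x|), sq_abs (f x), sq_abs (g x), abs_nonneg (f x),
    abs_nonneg (g x)]

open Classical in
noncomputable def Kfun {Ω : Type*} (Z₁ Z₂ : Ω → ℝ) : (Ω × Ω) × ℝ × ℝ → ℝ := fun z =>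
  (((if z.2.1 < Z₁ z.1.1 then (1:ℝ) else 0) - (if z.2.1 < Z₁ z.1.2 then (1:ℝ) else 0)) / z.2.1) *
  (((if z.2.2 < Z₂ z.1.1 then (1:ℝ) else 0) - (if z.2.2 < Z₂ z.1.2 then (1:ℝ) else 0)) / z.2.2)

lemma measurable_K {Ω : Type*} [MeasurableSpace Ω] {Z₁ Z₂ : Ω → ℝ}
    (hZ₁ : Measurable Z₁) (hZ₂ : Measurable Z₂) : Measurable (St4.Kfun Z₁ Z₂) := by
  unfold Kfun
  have m21 : Measurable fun z : (Ω × Ω) × ℝ × ℝ => z.2.1 := measurable_snd.fst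
  have m22 : Measurable fun z : (Ω × Ω) × ℝ × ℝ => z.2.2 := measurable_snd.snd
  have m11 : Measurable fun z : (Ω × Ω) × ℝ × ℝ => Z₁ z.1.1 := hZ₁.comp measurable_fst.fst
  have m12 : Measurable fun z : (Ω × Ω) × ℝ × ℝ => Z₁ z.1.2 := hZ₁.comp measurable_fst.snd
  have m21' : Measurable fun z : (Ω × Ω) × ℝ × ℝ => Z₂ z.1.1 := hZ₂.comp measurable_fst.fst
  have m22' : Measurable fun z : (Ω × Ω) × ℝ × ℝ => Z₂ z.1.2 := hZ₂.comp measurable_fst.snd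
  exact (((Measurable.ite (measurableSet_lt m21 m11) measurable_const measurable_const).sub
      (Measurable.ite (measurableSet_lt m21 m12) measurable_const measurable_const)).div m21).mul
    (((Measurable.ite (measurableSet_lt m22 m21') measurable_const measurable_const).sub
      (Measurable.ite (measurableSet_lt m22 m22') measurable_const measurable_const)).div m22)

end St4

theorem stmt_4 {Ω : Type*} [MeasurableSpace Ω] (P : Measure Ω) [IsProbabilityMeasure P]
    (Z₁ Z₂ : Ω → ℝ) (hZ₁ : Measurable Z₁) (hZ₂ : Measurable Z₂)
    (hZ₁pos : ∀ ω, 0 < Z₁ ω) (hZ₂pos : ∀ ω, 0 < Z₂ ω)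
    (hint₁ : Integrable (fun ω => (Real.log (Z₁ ω))^2) P)
    (hint₂ : Integrable (fun ω => (Real.log (Z₂ ω))^2) P) :
    (∫ ω, Real.log (Z₁ ω) * Real.log (Z₂ ω) ∂P)
        - (∫ ω, Real.log (Z₁ ω) ∂P) * (∫ ω, Real.log (Z₂ ω) ∂P)
      = ∫ r in Set.Ioi (0:ℝ), (∫ s in Set.Ioi (0:ℝ),
          ((P {ω | r < Z₁ ω ∧ s < Z₂ ω}).toReal
            - (P {ω | r < Z₁ ω}).toReal * (P {ω | s < Z₂ ω}).toReal) / s) / r := by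
  have hfm : Measurable fun ω => Real.log (Z₁ ω) := Real.measurable_log.comp hZ₁
  have hgm : Measurable fun ω => Real.log (Z₂ ω) := Real.measurable_log.comp hZ₂
  have hfint : Integrable (fun ω => Real.log (Z₁ ω)) P :=
    ((memLp_two_iff_integrable_sq hfm.aestronglyMeasurable).2 hint₁).integrable one_le_two
  have hgint : Integrable (fun ω => Real.log (Z₂ ω)) P :=
    ((memLp_two_iff_integrable_sq hgm.aestronglyMeasurable).2 hint₂).integrable one_le_two
  have hfg : Integrable (fun ω => Real.log (Z₁ ω) * Real.log (Z₂ ω)) P :=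
    St4.int_mul hfm.aestronglyMeasurable hgm.aestronglyMeasurable hint₁ hint₂
  -- integrability of the four product terms on P × P
  have h1i : Integrable (fun q : Ω × Ω => Real.log (Z₁ q.1) * Real.log (Z₂ q.1)) (P.prod P) := by
    simpa using hfg.mul_prod (integrable_const (1:ℝ))
  have h2i : Integrable (fun q : Ω × Ω => Real.log (Z₁ q.2) * Real.log (Z₂ q.2)) (P.prod P) := by
    simpa using (integrable_const (1:ℝ)).mul_prod hfg
  have h3i : Integrable (fun q : Ω × Ω => Real.log (Z₁ q.1) * Real.log (Z₂ q.2)) (P.prod P) :=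
    hfint.mul_prod hgint
  have h4i : Integrable (fun q : Ω × Ω => Real.log (Z₂ q.1) * Real.log (Z₁ q.2)) (P.prod P) :=
    hgint.mul_prod hfint
  have h12 : Integrable (fun q : Ω × Ω => Real.log (Z₁ q.1) * Real.log (Z₂ q.1)
      + Real.log (Z₁ q.2) * Real.log (Z₂ q.2)) (P.prod P) := h1i.add h2i
  have h34 : Integrable (fun q : Ω × Ω => Real.log (Z₁ q.1) * Real.log (Z₂ q.2)
      + Real.log (Z₂ q.1) * Real.log (Z₁ q.2)) (P.prod P) := h3i.add h4i
  have hΔ : Integrable (fun q : Ω × Ω =>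
      (Real.log (Z₁ q.1) - Real.log (Z₁ q.2)) * (Real.log (Z₂ q.1) - Real.log (Z₂ q.2)))
      (P.prod P) :=
    (h12.sub h34).congr (Filter.Eventually.of_forall fun q => by simp only [Pi.sub_apply]; ring)
  -- value of the double integral of the Δ-product
  have v1 : ∫ q : Ω × Ω, Real.log (Z₁ q.1) * Real.log (Z₂ q.1) ∂(P.prod P)
      = ∫ ω, Real.log (Z₁ ω) * Real.log (Z₂ ω) ∂P := by
    simpa using integral_prod_mul (μ := P) (ν := P)
      (fun ω => Real.log (Z₁ ω) * Real.log (Z₂ ω)) (fun _ => (1:ℝ))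
  have v2 : ∫ q : Ω × Ω, Real.log (Z₁ q.2) * Real.log (Z₂ q.2) ∂(P.prod P)
      = ∫ ω, Real.log (Z₁ ω) * Real.log (Z₂ ω) ∂P := by
    simpa using integral_prod_mul (μ := P) (ν := P)
      (fun _ => (1:ℝ)) (fun ω => Real.log (Z₁ ω) * Real.log (Z₂ ω))
  have v3 : ∫ q : Ω × Ω, Real.log (Z₁ q.1) * Real.log (Z₂ q.2) ∂(P.prod P)
      = (∫ ω, Real.log (Z₁ ω) ∂P) * ∫ ω, Real.log (Z₂ ω) ∂P :=
    integral_prod_mul (μ := P) (ν := P) (fun ω => Real.log (Z₁ ω)) (fun ω => Real.log (Z₂ ω))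
  have v4 : ∫ q : Ω × Ω, Real.log (Z₂ q.1) * Real.log (Z₁ q.2) ∂(P.prod P)
      = (∫ ω, Real.log (Z₂ ω) ∂P) * ∫ ω, Real.log (Z₁ ω) ∂P :=
    integral_prod_mul (μ := P) (ν := P) (fun ω => Real.log (Z₂ ω)) (fun ω => Real.log (Z₁ ω))
  have hstep1 : ∫ q : Ω × Ω,
      (Real.log (Z₁ q.1) - Real.log (Z₁ q.2)) * (Real.log (Z₂ q.1) - Real.log (Z₂ q.2))
        ∂(P.prod P)
      = 2 * ((∫ ω, Real.log (Z₁ ω) * Real.log (Z₂ ω) ∂P)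
          - (∫ ω, Real.log (Z₁ ω) ∂P) * (∫ ω, Real.log (Z₂ ω) ∂P)) := by
    have expand : ∫ q : Ω × Ω,
        (Real.log (Z₁ q.1) - Real.log (Z₁ q.2)) * (Real.log (Z₂ q.1) - Real.log (Z₂ q.2))
          ∂(P.prod P)
        = ∫ q : Ω × Ω,
            ((Real.log (Z₁ q.1) * Real.log (Z₂ q.1) + Real.log (Z₁ q.2) * Real.log (Z₂ q.2))
              - (Real.log (Z₁ q.1) * Real.log (Z₂ q.2) + Real.log (Z₂ q.1) * Real.log (Z₁ q.2)))
            ∂(P.prod P) :=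
      integral_congr_ae (Filter.Eventually.of_forall fun q => by ring)
    rw [expand, integral_sub h12 h34, integral_add h1i h2i, integral_add h3i h4i, v1, v2, v3, v4]
    ring
    -- pointwise representation of the Δ-product as a double integral
  have hKrep : ∀ q : Ω × Ω,
      ∫ p : ℝ × ℝ, St4.Kfun Z₁ Z₂ (q, p)
          ∂((volume.restrict (Set.Ioi 0)).prod (volume.restrict (Set.Ioi 0)))
      = (Real.log (Z₁ q.1) - Real.log (Z₁ q.2)) * (Real.log (Z₂ q.1) - Real.log (Z₂ q.2)) := by
    intro q
    have h := integral_prod_mul (μ := volume.restrict (Set.Ioi 0))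
      (ν := volume.restrict (Set.Ioi 0))
      (fun r => ((if r < Z₁ q.1 then (1:ℝ) else 0) - (if r < Z₁ q.2 then (1:ℝ) else 0)) / r)
      (fun s => ((if s < Z₂ q.1 then (1:ℝ) else 0) - (if s < Z₂ q.2 then (1:ℝ) else 0)) / s)
    rw [St4.D_integral (hZ₁pos q.1) (hZ₁pos q.2), St4.D_integral (hZ₂pos q.1) (hZ₂pos q.2)] at h
    exact h
  have hKnorm : ∀ q : Ω × Ω,
      ∫ p : ℝ × ℝ, ‖St4.Kfun Z₁ Z₂ (q, p)‖
          ∂((volume.restrict (Set.Ioi 0)).prod (volume.restrict (Set.Ioi 0)))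
      = |Real.log (Z₁ q.1) - Real.log (Z₁ q.2)| * |Real.log (Z₂ q.1) - Real.log (Z₂ q.2)| := by
    intro q
    have h := integral_prod_mul (μ := volume.restrict (Set.Ioi 0))
      (ν := volume.restrict (Set.Ioi 0))
      (fun r => |((if r < Z₁ q.1 then (1:ℝ) else 0) - (if r < Z₁ q.2 then (1:ℝ) else 0)) / r|)
      (fun s => |((if s < Z₂ q.1 then (1:ℝ) else 0) - (if s < Z₂ q.2 then (1:ℝ) else 0)) / s|)
    rw [St4.D_abs_integral (hZ₁pos q.1) (hZ₁pos q.2),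
      St4.D_abs_integral (hZ₂pos q.1) (hZ₂pos q.2)] at h
    rw [← h]
    refine integral_congr_ae (Filter.Eventually.of_forall fun p => ?_)
    simp [St4.Kfun, Real.norm_eq_abs, abs_mul, abs_div]
  have hKint : Integrable (St4.Kfun Z₁ Z₂)
      ((P.prod P).prod ((volume.restrict (Set.Ioi 0)).prod (volume.restrict (Set.Ioi 0)))) := by
    rw [integrable_prod_iff (St4.measurable_K hZ₁ hZ₂).aestronglyMeasurable]
    constructor
    · refine Filter.Eventually.of_forall fun q => ?_
      exact (St4.D_integrable (hZ₁pos q.1) (hZ₁pos q.2)).mul_prod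
        (St4.D_integrable (hZ₂pos q.1) (hZ₂pos q.2))
    · have e : (fun q : Ω × Ω => ∫ p : ℝ × ℝ, ‖St4.Kfun Z₁ Z₂ (q, p)‖
          ∂((volume.restrict (Set.Ioi 0)).prod (volume.restrict (Set.Ioi 0))))
          = fun q : Ω × Ω => |Real.log (Z₁ q.1) - Real.log (Z₁ q.2)|
              * |Real.log (Z₂ q.1) - Real.log (Z₂ q.2)| := funext hKnorm
      rw [e]
      exact hΔ.abs.congr (Filter.Eventually.of_forall fun q => by simp [abs_mul])
  -- the inner integral over Ω × Ω
  have hinner : ∀ p : ℝ × ℝ,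
      ∫ q : Ω × Ω, St4.Kfun Z₁ Z₂ (q, p) ∂(P.prod P)
      = 2 * ((P {ω | p.1 < Z₁ ω ∧ p.2 < Z₂ ω}).toReal
            - (P {ω | p.1 < Z₁ ω}).toReal * (P {ω | p.2 < Z₂ ω}).toReal) / (p.1 * p.2) := by
    intro p
    have hsA : MeasurableSet {ω | p.1 < Z₁ ω} := measurableSet_lt measurable_const hZ₁
    have hsB : MeasurableSet {ω | p.2 < Z₂ ω} := measurableSet_lt measurable_const hZ₂
    have hsAB : MeasurableSet {ω | p.1 < Z₁ ω ∧ p.2 < Z₂ ω} := hsA.inter hsB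
    obtain ⟨hA, vA⟩ := St4.int_ind P (c := fun ω => p.1 < Z₁ ω) hsA
    obtain ⟨hB, vB⟩ := St4.int_ind P (c := fun ω => p.2 < Z₂ ω) hsB
    obtain ⟨hAB, vAB⟩ := St4.int_ind P (c := fun ω => p.1 < Z₁ ω ∧ p.2 < Z₂ ω) hsAB
    -- A·B as single indicator
    have hABm : Integrable (fun ω => (if p.1 < Z₁ ω then (1:ℝ) else 0)
        * (if p.2 < Z₂ ω then (1:ℝ) else 0)) P := by
      refine hAB.congr (Filter.Eventually.of_forall fun ω => ?_)
      by_cases h1 : p.1 < Z₁ ω <;> by_cases h2 : p.2 < Z₂ ω <;> simp [h1, h2]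
    have vABm : ∫ ω, (if p.1 < Z₁ ω then (1:ℝ) else 0) * (if p.2 < Z₂ ω then (1:ℝ) else 0) ∂P
        = (P {ω | p.1 < Z₁ ω ∧ p.2 < Z₂ ω}).toReal := by
      rw [← vAB]
      refine integral_congr_ae (Filter.Eventually.of_forall fun ω => ?_)
      by_cases h1 : p.1 < Z₁ ω <;> by_cases h2 : p.2 < Z₂ ω <;> simp [h1, h2]
    -- the four product terms
    have iT1 : Integrable (fun q : Ω × Ω => (if p.1 < Z₁ q.1 then (1:ℝ) else 0)
        * (if p.2 < Z₂ q.1 then (1:ℝ) else 0)) (P.prod P) := by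
      simpa using hABm.mul_prod (integrable_const (1:ℝ))
    have iT2 : Integrable (fun q : Ω × Ω => (if p.1 < Z₁ q.2 then (1:ℝ) else 0)
        * (if p.2 < Z₂ q.2 then (1:ℝ) else 0)) (P.prod P) := by
      simpa using (integrable_const (1:ℝ)).mul_prod hABm
    have iT3 : Integrable (fun q : Ω × Ω => (if p.1 < Z₁ q.1 then (1:ℝ) else 0)
        * (if p.2 < Z₂ q.2 then (1:ℝ) else 0)) (P.prod P) := hA.mul_prod hB
    have iT4 : Integrable (fun q : Ω × Ω => (if p.2 < Z₂ q.1 then (1:ℝ) else 0)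
        * (if p.1 < Z₁ q.2 then (1:ℝ) else 0)) (P.prod P) := hB.mul_prod hA
    have iT12 : Integrable (fun q : Ω × Ω =>
        (if p.1 < Z₁ q.1 then (1:ℝ) else 0) * (if p.2 < Z₂ q.1 then (1:ℝ) else 0)
        + (if p.1 < Z₁ q.2 then (1:ℝ) else 0) * (if p.2 < Z₂ q.2 then (1:ℝ) else 0)) (P.prod P) :=
      iT1.add iT2
    have iT34 : Integrable (fun q : Ω × Ω =>
        (if p.1 < Z₁ q.1 then (1:ℝ) else 0) * (if p.2 < Z₂ q.2 then (1:ℝ) else 0)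
        + (if p.2 < Z₂ q.1 then (1:ℝ) else 0) * (if p.1 < Z₁ q.2 then (1:ℝ) else 0)) (P.prod P) :=
      iT3.add iT4
    -- values
    have vT1 : ∫ q : Ω × Ω, (if p.1 < Z₁ q.1 then (1:ℝ) else 0)
        * (if p.2 < Z₂ q.1 then (1:ℝ) else 0) ∂(P.prod P)
        = (P {ω | p.1 < Z₁ ω ∧ p.2 < Z₂ ω}).toReal := by
      have h := integral_prod_mul (μ := P) (ν := P)
        (fun ω => (if p.1 < Z₁ ω then (1:ℝ) else 0) * (if p.2 < Z₂ ω then (1:ℝ) else 0))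
        (fun _ => (1:ℝ))
      simp only [integral_const, measure_univ, ENNReal.toReal_one, probReal_univ, smul_eq_mul, mul_one,
        one_mul] at h
      rw [h, vABm]
    have vT2 : ∫ q : Ω × Ω, (if p.1 < Z₁ q.2 then (1:ℝ) else 0)
        * (if p.2 < Z₂ q.2 then (1:ℝ) else 0) ∂(P.prod P)
        = (P {ω | p.1 < Z₁ ω ∧ p.2 < Z₂ ω}).toReal := by
      have h := integral_prod_mul (μ := P) (ν := P) (fun _ => (1:ℝ))
        (fun ω => (if p.1 < Z₁ ω then (1:ℝ) else 0) * (if p.2 < Z₂ ω then (1:ℝ) else 0))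
      simp only [integral_const, measure_univ, ENNReal.toReal_one, probReal_univ, smul_eq_mul, mul_one,
        one_mul] at h
      rw [h, vABm]
    have vT3 : ∫ q : Ω × Ω, (if p.1 < Z₁ q.1 then (1:ℝ) else 0)
        * (if p.2 < Z₂ q.2 then (1:ℝ) else 0) ∂(P.prod P)
        = (P {ω | p.1 < Z₁ ω}).toReal * (P {ω | p.2 < Z₂ ω}).toReal := by
      have h := integral_prod_mul (μ := P) (ν := P)
        (fun ω => (if p.1 < Z₁ ω then (1:ℝ) else 0)) (fun ω => (if p.2 < Z₂ ω then (1:ℝ) else 0))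
      rw [vA, vB] at h
      exact h
    have vT4 : ∫ q : Ω × Ω, (if p.2 < Z₂ q.1 then (1:ℝ) else 0)
        * (if p.1 < Z₁ q.2 then (1:ℝ) else 0) ∂(P.prod P)
        = (P {ω | p.2 < Z₂ ω}).toReal * (P {ω | p.1 < Z₁ ω}).toReal := by
      have h := integral_prod_mul (μ := P) (ν := P)
        (fun ω => (if p.2 < Z₂ ω then (1:ℝ) else 0)) (fun ω => (if p.1 < Z₁ ω then (1:ℝ) else 0))
      rw [vA, vB] at h
      exact h
    -- expand K
    have eK : (fun q : Ω × Ω => St4.Kfun Z₁ Z₂ (q, p)) = fun q : Ω × Ω =>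
        (((if p.1 < Z₁ q.1 then (1:ℝ) else 0) * (if p.2 < Z₂ q.1 then (1:ℝ) else 0)
          + (if p.1 < Z₁ q.2 then (1:ℝ) else 0) * (if p.2 < Z₂ q.2 then (1:ℝ) else 0))
          - ((if p.1 < Z₁ q.1 then (1:ℝ) else 0) * (if p.2 < Z₂ q.2 then (1:ℝ) else 0)
            + (if p.2 < Z₂ q.1 then (1:ℝ) else 0) * (if p.1 < Z₁ q.2 then (1:ℝ) else 0)))
          / (p.1 * p.2) := by
      funext q
      show (((if p.1 < Z₁ q.1 then (1:ℝ) else 0) - (if p.1 < Z₁ q.2 then (1:ℝ) else 0)) / p.1)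
          * (((if p.2 < Z₂ q.1 then (1:ℝ) else 0) - (if p.2 < Z₂ q.2 then (1:ℝ) else 0)) / p.2)
          = _
      ring
    rw [eK, integral_div, integral_sub iT12 iT34, integral_add iT1 iT2, integral_add iT3 iT4,
      vT1, vT2, vT3, vT4]
    ring
  -- Fubini: integrability of the inner integral
  have hG : Integrable (fun p : ℝ × ℝ => ∫ q : Ω × Ω, St4.Kfun Z₁ Z₂ (q, p) ∂(P.prod P))
      ((volume.restrict (Set.Ioi 0)).prod (volume.restrict (Set.Ioi 0))) :=
    hKint.swap.integral_prod_left
  have hGa : Integrable (fun p : ℝ × ℝ => 2 * ((P {ω | p.1 < Z₁ ω ∧ p.2 < Z₂ ω}).toReal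
      - (P {ω | p.1 < Z₁ ω}).toReal * (P {ω | p.2 < Z₂ ω}).toReal) / (p.1 * p.2))
      ((volume.restrict (Set.Ioi 0)).prod (volume.restrict (Set.Ioi 0))) :=
    hG.congr (Filter.Eventually.of_forall hinner)
  have key : ∫ q : Ω × Ω,
      (Real.log (Z₁ q.1) - Real.log (Z₁ q.2)) * (Real.log (Z₂ q.1) - Real.log (Z₂ q.2))
        ∂(P.prod P)
      = 2 * ∫ r in Set.Ioi (0:ℝ), (∫ s in Set.Ioi (0:ℝ),
          ((P {ω | r < Z₁ ω ∧ s < Z₂ ω}).toReal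
            - (P {ω | r < Z₁ ω}).toReal * (P {ω | s < Z₂ ω}).toReal) / s) / r := by
    calc ∫ q : Ω × Ω,
        (Real.log (Z₁ q.1) - Real.log (Z₁ q.2)) * (Real.log (Z₂ q.1) - Real.log (Z₂ q.2))
          ∂(P.prod P)
        = ∫ q : Ω × Ω, ∫ p : ℝ × ℝ, St4.Kfun Z₁ Z₂ (q, p)
            ∂((volume.restrict (Set.Ioi 0)).prod (volume.restrict (Set.Ioi 0))) ∂(P.prod P) :=
          integral_congr_ae (Filter.Eventually.of_forall fun q => (hKrep q).symm)
      _ = ∫ p : ℝ × ℝ, ∫ q : Ω × Ω, St4.Kfun Z₁ Z₂ (q, p) ∂(P.prod P)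
            ∂((volume.restrict (Set.Ioi 0)).prod (volume.restrict (Set.Ioi 0))) :=
          integral_integral_swap (f := fun q p => St4.Kfun Z₁ Z₂ (q, p)) hKint
      _ = ∫ p : ℝ × ℝ, 2 * ((P {ω | p.1 < Z₁ ω ∧ p.2 < Z₂ ω}).toReal
            - (P {ω | p.1 < Z₁ ω}).toReal * (P {ω | p.2 < Z₂ ω}).toReal) / (p.1 * p.2)
            ∂((volume.restrict (Set.Ioi 0)).prod (volume.restrict (Set.Ioi 0))) :=
          integral_congr_ae (Filter.Eventually.of_forall hinner)
      _ = ∫ x in Set.Ioi (0:ℝ), ∫ y in Set.Ioi (0:ℝ),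
            2 * ((P {ω | x < Z₁ ω ∧ y < Z₂ ω}).toReal
              - (P {ω | x < Z₁ ω}).toReal * (P {ω | y < Z₂ ω}).toReal) / (x * y) := by
          rw [integral_prod _ hGa]
      _ = 2 * ∫ x in Set.Ioi (0:ℝ), (∫ y in Set.Ioi (0:ℝ),
            ((P {ω | x < Z₁ ω ∧ y < Z₂ ω}).toReal
              - (P {ω | x < Z₁ ω}).toReal * (P {ω | y < Z₂ ω}).toReal) / y) / x := by
          rw [← integral_const_mul]
          refine integral_congr_ae (Filter.Eventually.of_forall fun x => ?_)
          dsimp only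
          rw [← integral_div, ← integral_const_mul]
          refine integral_congr_ae (Filter.Eventually.of_forall fun y => ?_)
          ring
  linarith [hstep1, key]
end

section
/- One has 2∫₀^∞ e^{-u}(1 − e^{-u})(1 − u)(du/u) = 2 log 2 − 1. -/
open MeasureTheory Real Set Filter Topology

namespace Stmt6

noncomputable def g (u : ℝ) : ℝ := Real.exp (-u) / u

lemma integrableOn_expc_div {ε c : ℝ} (hε : 0 < ε) (hc : 1 ≤ c) :
    IntegrableOn (fun u => Real.exp (-(c * u)) / u) (Ioi ε) := by
  have hexp : IntegrableOn (fun u => Real.exp (-u)) (Ioi ε) := by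
    simpa using exp_neg_integrableOn_Ioi ε one_pos
  have hcont : ContinuousOn (fun u => Real.exp (-(c * u)) / u) (Ioi ε) := by
    apply ContinuousOn.div (by fun_prop) continuousOn_id
    intro x hx; exact (hε.trans hx).ne'
  refine (hexp.const_mul ε⁻¹).mono' (hcont.aestronglyMeasurable measurableSet_Ioi) ?_
  rw [ae_restrict_iff' measurableSet_Ioi]
  filter_upwards with u hu
  have hu0 : 0 < u := hε.trans hu
  have h1 : Real.exp (-(c * u)) ≤ Real.exp (-u) := by
    apply Real.exp_le_exp.2; nlinarith
  have h2 : Real.exp (-(c * u)) / u ≤ Real.exp (-u) / ε :=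
    div_le_div₀ (Real.exp_pos _).le h1 hε hu.le
  rw [Real.norm_eq_abs, abs_of_nonneg (div_nonneg (Real.exp_pos _).le hu0.le),
    inv_mul_eq_div]
  exact h2

lemma integrableOn_g {ε : ℝ} (hε : 0 < ε) : IntegrableOn g (Ioi ε) := by
  have := integrableOn_expc_div hε le_rfl
  show IntegrableOn (fun u => Real.exp (-u) / u) (Ioi ε)
  simpa using this

lemma integrableOn_f : IntegrableOn
    (fun u => Real.exp (-u) * (1 - Real.exp (-u)) * (1 - u) / u) (Ioi (0:ℝ)) := by
  have hcont : ContinuousOn (fun u => Real.exp (-u) * (1 - Real.exp (-u)) * (1 - u) / u)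
      (Ioi (0:ℝ)) := by
    apply ContinuousOn.div (by fun_prop) continuousOn_id
    intro x hx; exact (ne_of_gt hx)
  have hbound : IntegrableOn (fun u => Real.exp (-u) + u * Real.exp (-u)) (Ioi (0:ℝ)) := by
    apply Integrable.add
    · exact (by simpa using exp_neg_integrableOn_Ioi 0 one_pos :
        IntegrableOn (fun u : ℝ => Real.exp (-u)) (Ioi 0))
    · have := Real.GammaIntegral_convergent (s := 2) (by norm_num)
      apply this.congr_fun ?_ measurableSet_Ioi
      intro x hx
      norm_num [mul_comm]
  refine hbound.mono' (hcont.aestronglyMeasurable measurableSet_Ioi) ?_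
  rw [ae_restrict_iff' measurableSet_Ioi]
  filter_upwards with u hu
  have hu0 : (0:ℝ) < u := hu
  have h1 : 1 - Real.exp (-u) ≤ u := by nlinarith [Real.add_one_le_exp (-u)]
  have h2 : 0 ≤ 1 - Real.exp (-u) := by
    have : Real.exp (-u) ≤ 1 := Real.exp_le_one_iff.2 (by linarith)
    linarith
  have habs : |1 - u| ≤ 1 + u := abs_le.2 ⟨by linarith, by linarith⟩
  rw [Real.norm_eq_abs, abs_div, abs_of_pos hu0, abs_mul, abs_mul,
    abs_of_nonneg (Real.exp_pos _).le, abs_of_nonneg h2, div_le_iff₀ hu0]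
  nlinarith [mul_le_mul h1 habs (abs_nonneg _) hu0.le, Real.exp_pos (-u),
    mul_le_mul_of_nonneg_left (mul_le_mul h1 habs (abs_nonneg _) hu0.le)
      (Real.exp_pos (-u)).le]

lemma key {ε : ℝ} (hε : 0 < ε) :
    ∫ u in Ioi ε, Real.exp (-u) * (1 - Real.exp (-u)) * (1 - u) / u
      = (∫ u in Ioc ε (2*ε), g u) + (Real.exp (-(2*ε))/2 - Real.exp (-ε)) := by
  have h2ε : 0 < 2*ε := by linarith
  have hle : ε ≤ 2*ε := by linarith
  have I1 : IntegrableOn g (Ioi ε) := integrableOn_g hε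
  have I1' : IntegrableOn g (Ioi (2*ε)) := integrableOn_g h2ε
  have I2 : IntegrableOn (fun u => Real.exp (-(2*u)) / u) (Ioi ε) :=
    integrableOn_expc_div hε one_le_two
  have hexp1 : IntegrableOn (fun u => Real.exp (-u)) (Ioi ε) := by
    simpa using exp_neg_integrableOn_Ioi ε one_pos
  have hexp2 : IntegrableOn (fun u => Real.exp (-(2*u))) (Ioi ε) := by
    simpa [neg_mul] using exp_neg_integrableOn_Ioi ε two_pos
  -- pointwise decomposition
  have hdecomp : ∫ u in Ioi ε, Real.exp (-u) * (1 - Real.exp (-u)) * (1 - u) / u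
      = ∫ u in Ioi ε, ((Real.exp (-u) / u - Real.exp (-(2*u)) / u)
          - (Real.exp (-u) - Real.exp (-(2*u)))) := by
    apply setIntegral_congr_fun measurableSet_Ioi
    intro u hu
    have hu0 : u ≠ 0 := (hε.trans hu).ne'
    have h2 : Real.exp (-(2*u)) = Real.exp (-u) * Real.exp (-u) := by
      rw [← Real.exp_add]; ring_nf
    simp only [h2]
    field_simp
  have hsub : ∫ u in Ioi ε, ((Real.exp (-u) / u - Real.exp (-(2*u)) / u)
          - (Real.exp (-u) - Real.exp (-(2*u))))
      = ((∫ u in Ioi ε, Real.exp (-u) / u) - ∫ u in Ioi ε, Real.exp (-(2*u)) / u)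
        - ((∫ u in Ioi ε, Real.exp (-u)) - ∫ u in Ioi ε, Real.exp (-(2*u))) := by
    have I1l : IntegrableOn (fun u => Real.exp (-u) / u) (Ioi ε) := I1
    rw [integral_sub
      (f := fun u => Real.exp (-u) / u - Real.exp (-(2*u)) / u)
      (g := fun u => Real.exp (-u) - Real.exp (-(2*u)))
      (I1l.sub I2) (hexp1.sub hexp2),
      integral_sub (f := fun u => Real.exp (-u) / u) (g := fun u => Real.exp (-(2*u)) / u)
        I1l I2,
      integral_sub (f := fun u => Real.exp (-u)) (g := fun u => Real.exp (-(2*u)))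
        hexp1 hexp2]
  -- change of variables for exp(-(2u))/u
  have hchg : ∫ u in Ioi ε, Real.exp (-(2*u)) / u = ∫ u in Ioi (2*ε), g u := by
    have h1 : ∫ u in Ioi ε, Real.exp (-(2*u)) / u = ∫ u in Ioi ε, 2 * g (2*u) := by
      apply setIntegral_congr_fun measurableSet_Ioi
      intro u hu
      have hu0 : u ≠ 0 := (hε.trans hu).ne'
      simp only [g]
      field_simp
    rw [h1, integral_const_mul, integral_comp_mul_left_Ioi g ε two_pos, smul_eq_mul]
    ring
  -- ∫ exp(-(2u))
  have hchg2 : ∫ u in Ioi ε, Real.exp (-(2*u)) = Real.exp (-(2*ε)) / 2 := by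
    rw [integral_comp_mul_left_Ioi (fun v => Real.exp (-v)) ε two_pos, smul_eq_mul,
      integral_exp_neg_Ioi]
    ring
  -- splitting
  have hsplit : ∫ u in Ioi ε, g u = (∫ u in Ioc ε (2*ε), g u) + ∫ u in Ioi (2*ε), g u := by
    rw [← Ioc_union_Ioi_eq_Ioi hle,
      setIntegral_union (Ioc_disjoint_Ioi le_rfl) measurableSet_Ioi
        (I1.mono_set Ioc_subset_Ioi_self) I1']
  have hgdef : ∫ u in Ioi ε, Real.exp (-u) / u = ∫ u in Ioi ε, g u := rfl
  rw [hdecomp, hsub, hgdef, hchg, hchg2, integral_exp_neg_Ioi, hsplit]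
  ring

lemma ioc_bound {ε : ℝ} (hε : 0 < ε) :
    ‖(∫ u in Ioc ε (2*ε), g u) - Real.log 2‖ ≤ ε := by
  have hle : ε ≤ 2*ε := by linarith
  have hIcc : ∀ u ∈ Icc ε (2*ε), u ≠ 0 := fun u hu => (hε.trans_le hu.1).ne'
  have hint1 : IntegrableOn (fun u => (1:ℝ)/u) (Ioc ε (2*ε)) := by
    apply (ContinuousOn.integrableOn_Icc ?_).mono_set Ioc_subset_Icc_self
    exact ContinuousOn.div continuousOn_const continuousOn_id hIcc
  have hint2 : IntegrableOn (fun u => (Real.exp (-u) - 1)/u) (Ioc ε (2*ε)) := by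
    apply (ContinuousOn.integrableOn_Icc ?_).mono_set Ioc_subset_Icc_self
    exact ContinuousOn.div (by fun_prop) continuousOn_id hIcc
  have hsplit : ∫ u in Ioc ε (2*ε), g u
      = (∫ u in Ioc ε (2*ε), (1:ℝ)/u) + ∫ u in Ioc ε (2*ε), (Real.exp (-u) - 1)/u := by
    rw [← integral_add hint1 hint2]
    apply setIntegral_congr_fun measurableSet_Ioc
    intro u hu
    have hu0 : u ≠ 0 := (hε.trans hu.1).ne'
    simp only [g]
    field_simp
    ring
  have hlog : ∫ u in Ioc ε (2*ε), (1:ℝ)/u = Real.log 2 := by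
    rw [← intervalIntegral.integral_of_le hle, integral_one_div]
    · rw [mul_div_assoc, div_self hε.ne', mul_one]
    · intro h
      rcases h with ⟨h1, h2⟩
      rw [min_eq_left hle] at h1
      linarith
  have hrem : ‖∫ u in Ioc ε (2*ε), (Real.exp (-u) - 1)/u‖ ≤ ε := by
    have hmeas : volume (Ioc ε (2*ε)) < ⊤ := by
      rw [Real.volume_Ioc]; exact ENNReal.ofReal_lt_top
    have hb : ∀ u ∈ Ioc ε (2*ε), ‖(Real.exp (-u) - 1)/u‖ ≤ (1:ℝ) := by
      intro u hu
      have hu0 : 0 < u := hε.trans hu.1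
      have h1 : Real.exp (-u) ≤ 1 := Real.exp_le_one_iff.2 (by linarith)
      have h2 : 1 - Real.exp (-u) ≤ u := by nlinarith [Real.add_one_le_exp (-u)]
      rw [Real.norm_eq_abs, abs_div, abs_of_pos hu0, div_le_one hu0,
        abs_sub_comm, abs_of_nonneg (by linarith)]
      linarith
    have := norm_setIntegral_le_of_norm_le_const hmeas hb
    refine this.trans ?_
    rw [measureReal_def, Real.volume_Ioc, ENNReal.toReal_ofReal (by linarith)]
    simp
    linarith
  rw [hsplit, hlog]
  simpa using hrem

end Stmt6

open Stmt6 in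
theorem stmt_6 :
    2 * (∫ u in Set.Ioi (0:ℝ),
          Real.exp (-u) * (1 - Real.exp (-u)) * (1 - u) / u)
      = 2 * Real.log 2 - 1 := by
  set f : ℝ → ℝ := fun u => Real.exp (-u) * (1 - Real.exp (-u)) * (1 - u) / u with hf
  have hεn : ∀ n : ℕ, (0:ℝ) < 1/((n:ℝ)+1) := fun n => by positivity
  -- monotone family of sets
  have hUnion : (⋃ n : ℕ, Ioi (1/((n:ℝ)+1))) = Ioi (0:ℝ) := by
    ext x
    simp only [mem_iUnion, mem_Ioi]
    constructor
    · rintro ⟨n, hn⟩; exact (hεn n).trans hn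
    · intro hx
      obtain ⟨n, hn⟩ := exists_nat_one_div_lt hx
      exact ⟨n, hn⟩
  have hmono : Monotone (fun n : ℕ => Ioi (1/((n:ℝ)+1))) := by
    intro n m hnm
    apply Ioi_subset_Ioi
    apply one_div_le_one_div_of_le (by positivity)
    have : (n:ℝ) ≤ m := Nat.cast_le.2 hnm
    linarith
  have htendsto1 : Tendsto (fun n : ℕ => ∫ u in Ioi (1/((n:ℝ)+1)), f u) atTop
      (𝓝 (∫ u in Ioi (0:ℝ), f u)) := by
    have := tendsto_setIntegral_of_monotone (μ := volume)
      (s := fun n : ℕ => Ioi (1/((n:ℝ)+1))) (f := f)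
      (fun n => measurableSet_Ioi) hmono (by rw [hUnion]; exact integrableOn_f)
    rwa [hUnion] at this
  -- explicit limit
  have hseq0 : Tendsto (fun n : ℕ => 1/((n:ℝ)+1)) atTop (𝓝 0) :=
    tendsto_one_div_add_atTop_nhds_zero_nat
  have hpart2 : Tendsto (fun n : ℕ =>
      Real.exp (-(2*(1/((n:ℝ)+1))))/2 - Real.exp (-(1/((n:ℝ)+1)))) atTop
      (𝓝 (1/2 - 1)) := by
    have hc : Continuous (fun ε : ℝ => Real.exp (-(2*ε))/2 - Real.exp (-ε)) := by fun_prop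
    have := (hc.tendsto 0).comp hseq0
    simpa [Function.comp_def] using this
  have hpart1 : Tendsto (fun n : ℕ => ∫ u in Ioc (1/((n:ℝ)+1)) (2*(1/((n:ℝ)+1))), g u)
      atTop (𝓝 (Real.log 2)) := by
    have h0 : Tendsto (fun n : ℕ =>
        (∫ u in Ioc (1/((n:ℝ)+1)) (2*(1/((n:ℝ)+1))), g u) - Real.log 2) atTop (𝓝 0) := by
      apply squeeze_zero_norm (fun n => ioc_bound (hεn n)) hseq0
    have := h0.add_const (Real.log 2)
    simpa using this
  have htendsto2 : Tendsto (fun n : ℕ => ∫ u in Ioi (1/((n:ℝ)+1)), f u) atTop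
      (𝓝 (Real.log 2 - 1/2)) := by
    have heq : (fun n : ℕ => ∫ u in Ioi (1/((n:ℝ)+1)), f u)
        = fun n : ℕ => (∫ u in Ioc (1/((n:ℝ)+1)) (2*(1/((n:ℝ)+1))), g u)
            + (Real.exp (-(2*(1/((n:ℝ)+1))))/2 - Real.exp (-(1/((n:ℝ)+1)))) := by
      funext n
      exact key (hεn n)
    rw [heq]
    have := hpart1.add hpart2
    convert this using 2
    ring
  have := tendsto_nhds_unique htendsto1 htendsto2
  rw [hf] at this
  rw [this]
  ring
end

section
/- For a fixed norm |·| on ℝ^d with unit-ball volume v_d, for all r₁ ≥ r₂ > 0, the quantity T(v_d r₁^d, v_d r₂^d) := ∫_{B(0,r₁+r₂) \ B(0,r₁)} ( exp(Leb(B(0,r₁) ∩ B(y,r₂))) − 1 ) dy satisfies T(v_d r₁^d, v_d r₂^d) ≤ d 2^{d-1} v_d r₁^{d-1} r₂ e^{v_d r₂^d}. -/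
open MeasureTheory Set Pointwise

lemma pow_sub_pow_le_aux {a b : ℝ} (hb : 0 ≤ b) (hab : b ≤ a) (n : ℕ) :
    a ^ n - b ^ n ≤ n * a ^ (n - 1) * (a - b) := by
  induction n with
  | zero => simp
  | succ n ih =>
    rcases Nat.eq_zero_or_pos n with rfl | hn
    · simp
    · have ha : 0 ≤ a := hb.trans hab
      have h2 : b ^ n ≤ a ^ n := pow_le_pow_left₀ hb hab n
      have hpow : a * a ^ (n - 1) = a ^ n := by
        rw [← pow_succ', Nat.sub_add_cancel hn]
      have h3 : a * (a ^ n - b ^ n) ≤ a * (↑n * a ^ (n - 1) * (a - b)) :=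
        mul_le_mul_of_nonneg_left ih ha
      have h4 : a * (↑n * a ^ (n - 1) * (a - b)) = ↑n * a ^ n * (a - b) := by
        rw [show a * (↑n * a ^ (n - 1) * (a - b)) = ↑n * (a * a ^ (n - 1)) * (a - b) by ring,
          hpow]
      have h3' : a * (a ^ n - b ^ n) ≤ ↑n * a ^ n * (a - b) := h3.trans_eq h4
      have key : a ^ (n + 1) - b ^ (n + 1) = a * (a ^ n - b ^ n) + b ^ n * (a - b) := by ring
      have h5 : b ^ n * (a - b) ≤ a ^ n * (a - b) :=
        mul_le_mul_of_nonneg_right h2 (by linarith)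
      simp only [Nat.add_sub_cancel, Nat.cast_add, Nat.cast_one]
      linarith

theorem stmt_8 (d : ℕ) (hd : 0 < d)
    (nrm : (Fin d → ℝ) → ℝ)
    (h0 : ∀ x, nrm x = 0 ↔ x = 0)
    (hsmul : ∀ (a : ℝ) x, nrm (a • x) = |a| * nrm x)
    (htri : ∀ x y, nrm (x + y) ≤ nrm x + nrm y)
    (hcont : Continuous nrm)
    (r₁ r₂ : ℝ) (hr₂ : 0 < r₂) (hr : r₂ ≤ r₁) :
    (∫ y in {y : Fin d → ℝ | nrm y ≤ r₁ + r₂} \ {y : Fin d → ℝ | nrm y ≤ r₁},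
        (Real.exp ((volume {z : Fin d → ℝ | nrm z ≤ r₁ ∧ nrm (z - y) ≤ r₂}).toReal) - 1))
      ≤ (d:ℝ) * 2^(d-1) * (volume {y : Fin d → ℝ | nrm y ≤ 1}).toReal
          * r₁^(d-1) * r₂
          * Real.exp ((volume {y : Fin d → ℝ | nrm y ≤ 1}).toReal * r₂^d) := by
  have hr₁ : 0 < r₁ := hr₂.trans_le hr
  -- nonnegativity of nrm
  have hnrm0 : nrm 0 = 0 := (h0 0).mpr rfl
  have hnonneg : ∀ x, 0 ≤ nrm x := by
    intro x
    have h1 : nrm ((-1 : ℝ) • x) = nrm x := by rw [hsmul]; simp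
    have h2 := htri x ((-1 : ℝ) • x)
    have h3 : x + (-1 : ℝ) • x = 0 := by simp
    rw [h3, hnrm0, h1] at h2
    linarith
  -- lower bound: c * ‖y‖ ≤ nrm y
  obtain ⟨c, hcpos, hclow⟩ : ∃ c > 0, ∀ y, c * ‖y‖ ≤ nrm y := by
    have hsph : IsCompact (Metric.sphere (0 : Fin d → ℝ) 1) := isCompact_sphere 0 1
    have hne : (Metric.sphere (0 : Fin d → ℝ) 1).Nonempty := by
      set e : Fin d → ℝ := Pi.single ⟨0, hd⟩ (1 : ℝ) with he
      have he0 : e ≠ 0 := by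
        intro h
        have := congrFun h ⟨0, hd⟩
        simp [he, Pi.single_eq_same] at this
      have hne' : ‖e‖ ≠ 0 := norm_ne_zero_iff.mpr he0
      refine ⟨‖e‖⁻¹ • e, ?_⟩
      simp [norm_smul, abs_of_nonneg (inv_nonneg.mpr (norm_nonneg e)),
        inv_mul_cancel₀ hne']
    obtain ⟨x₀, hx₀mem, hx₀min⟩ := hsph.exists_isMinOn hne hcont.continuousOn
    have hx₀ne : x₀ ≠ 0 := by
      intro h
      rw [h] at hx₀mem
      simp at hx₀mem
    refine ⟨nrm x₀, (hnonneg x₀).lt_of_ne (fun h => hx₀ne ((h0 x₀).mp h.symm)), ?_⟩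
    intro y
    rcases eq_or_ne y 0 with rfl | hy
    · simp [hnrm0]
    · have hny : (0:ℝ) < ‖y‖ := norm_pos_iff.mpr hy
      have hmem : (‖y‖⁻¹ • y) ∈ Metric.sphere (0 : Fin d → ℝ) 1 := by
        simp [norm_smul, abs_of_nonneg (inv_nonneg.mpr (norm_nonneg y)),
          inv_mul_cancel₀ hny.ne']
      have h1 : nrm x₀ ≤ nrm (‖y‖⁻¹ • y) := hx₀min hmem
      rw [hsmul, abs_of_nonneg (inv_nonneg.mpr (norm_nonneg y))] at h1
      have h2 := mul_le_mul_of_nonneg_left h1 hny.le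
      have h3 : ‖y‖ * (‖y‖⁻¹ * nrm y) = nrm y := by field_simp
      nlinarith [h2, h3]
  -- measurability of norm balls
  have hmeasr : ∀ r : ℝ, MeasurableSet {y : Fin d → ℝ | nrm y ≤ r} := fun r =>
    (isClosed_le hcont continuous_const).measurableSet
  -- finiteness
  have hfin : ∀ r : ℝ, volume {y : Fin d → ℝ | nrm y ≤ r} < ⊤ := by
    intro r
    have hsub : {y : Fin d → ℝ | nrm y ≤ r} ⊆ Metric.closedBall 0 (r / c) := by
      intro y hy
      rw [Metric.mem_closedBall, dist_zero_right, le_div_iff₀ hcpos]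
      have := hclow y
      simp only [mem_setOf_eq] at hy
      linarith [hclow y]
    exact lt_of_le_of_lt (measure_mono hsub) (measure_closedBall_lt_top)
  -- volume of balls by scaling
  have hball : ∀ r : ℝ, 0 < r → {y : Fin d → ℝ | nrm y ≤ r}
      = (r • {y : Fin d → ℝ | nrm y ≤ 1} : Set (Fin d → ℝ)) := by
    intro r hrp
    ext y
    rw [mem_smul_set_iff_inv_smul_mem₀ hrp.ne']
    simp only [mem_setOf_eq, hsmul, abs_of_nonneg (inv_nonneg.mpr hrp.le)]
    rw [inv_mul_le_iff₀ hrp, mul_one]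
  have hvol : ∀ r : ℝ, 0 < r → volume {y : Fin d → ℝ | nrm y ≤ r}
      = ENNReal.ofReal (r ^ d) * volume {y : Fin d → ℝ | nrm y ≤ 1} := by
    intro r hrp
    rw [hball r hrp, Measure.addHaar_smul_of_nonneg volume hrp.le, Module.finrank_fin_fun]
  set V := (volume {y : Fin d → ℝ | nrm y ≤ 1}).toReal with hV
  have hVnn : 0 ≤ V := ENNReal.toReal_nonneg
  set X := V * r₂ ^ d with hX
  have hXnn : 0 ≤ X := mul_nonneg hVnn (pow_nonneg hr₂.le d)
  set A := {y : Fin d → ℝ | nrm y ≤ r₁ + r₂} with hA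
  set B := {y : Fin d → ℝ | nrm y ≤ r₁} with hB
  have hBA : B ⊆ A := by
    intro y hy
    simp only [hA, hB, mem_setOf_eq] at *
    linarith
  have hμA : volume A ≠ ⊤ := (hfin _).ne
  have hμB : volume B ≠ ⊤ := (hfin _).ne
  have hμS : volume (A \ B) < ⊤ := lt_of_le_of_lt (measure_mono diff_subset) (hfin _)
  -- pointwise bound on the intersection volume
  have hIbound : ∀ y : Fin d → ℝ,
      (volume {z : Fin d → ℝ | nrm z ≤ r₁ ∧ nrm (z - y) ≤ r₂}).toReal ≤ X := by
    intro y
    have hsub : {z : Fin d → ℝ | nrm z ≤ r₁ ∧ nrm (z - y) ≤ r₂}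
        ⊆ (fun z => z + (-y)) ⁻¹' {w : Fin d → ℝ | nrm w ≤ r₂} := by
      intro z hz
      simp only [mem_preimage, mem_setOf_eq, ← sub_eq_add_neg]
      exact hz.2
    have htrans : volume ((fun z : Fin d → ℝ => z + (-y)) ⁻¹' {w | nrm w ≤ r₂})
        = volume {w : Fin d → ℝ | nrm w ≤ r₂} :=
      measure_preimage_add_right volume (-y) _
    have h1 : volume {z : Fin d → ℝ | nrm z ≤ r₁ ∧ nrm (z - y) ≤ r₂}
        ≤ volume {w : Fin d → ℝ | nrm w ≤ r₂} := le_trans (measure_mono hsub) htrans.le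
    have h2 : (volume {w : Fin d → ℝ | nrm w ≤ r₂}).toReal = r₂ ^ d * V := by
      rw [hvol r₂ hr₂, ENNReal.toReal_mul, ENNReal.toReal_ofReal (pow_nonneg hr₂.le d)]
    calc (volume {z : Fin d → ℝ | nrm z ≤ r₁ ∧ nrm (z - y) ≤ r₂}).toReal
        ≤ (volume {w : Fin d → ℝ | nrm w ≤ r₂}).toReal :=
          ENNReal.toReal_mono (hfin r₂).ne h1
      _ = X := by rw [h2, hX]; ring
  -- measurability of the integrand
  have hmI : Measurable fun y : Fin d → ℝ =>
      volume {z : Fin d → ℝ | nrm z ≤ r₁ ∧ nrm (z - y) ≤ r₂} := by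
    have hset : MeasurableSet {p : (Fin d → ℝ) × (Fin d → ℝ) |
        nrm p.2 ≤ r₁ ∧ nrm (p.2 - p.1) ≤ r₂} := by
      exact ((isClosed_le (hcont.comp continuous_snd) continuous_const).inter
        (isClosed_le (hcont.comp (continuous_snd.sub continuous_fst))
          continuous_const)).measurableSet
    have := measurable_measure_prodMk_left (ν := (volume : Measure (Fin d → ℝ))) hset
    exact this
  have hmf : AEStronglyMeasurable (fun y : Fin d → ℝ =>
      Real.exp ((volume {z : Fin d → ℝ | nrm z ≤ r₁ ∧ nrm (z - y) ≤ r₂}).toReal) - 1)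
      (volume.restrict (A \ B)) :=
    ((Real.continuous_exp.measurable.comp hmI.ennreal_toReal).sub
      measurable_const).aestronglyMeasurable
  -- bound on the integral
  have hCnn : (0:ℝ) ≤ Real.exp X - 1 := by
    have := Real.one_le_exp hXnn; linarith
  have hbound : ∀ y ∈ A \ B,
      ‖Real.exp ((volume {z : Fin d → ℝ | nrm z ≤ r₁ ∧ nrm (z - y) ≤ r₂}).toReal) - 1‖
        ≤ Real.exp X - 1 := by
    intro y _
    have h1 := hIbound y
    have h2 : (1:ℝ) ≤ Real.exp (volume {z : Fin d → ℝ | nrm z ≤ r₁ ∧ nrm (z - y) ≤ r₂}).toReal :=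
      Real.one_le_exp ENNReal.toReal_nonneg
    rw [Real.norm_eq_abs, abs_of_nonneg (by linarith)]
    have := Real.exp_le_exp.mpr h1
    linarith
  have hint := norm_setIntegral_le_of_norm_le_const (μ := volume) hμS hbound
  -- measure of the annulus
  have hμdiff : (volume (A \ B)).toReal = (r₁ + r₂) ^ d * V - r₁ ^ d * V := by
    rw [measure_diff hBA (hmeasr r₁).nullMeasurableSet hμB,
      ENNReal.toReal_sub_of_le (measure_mono hBA) hμA,
      hvol (r₁ + r₂) (by linarith), hvol r₁ hr₁, ENNReal.toReal_mul, ENNReal.toReal_mul,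
      ENNReal.toReal_ofReal (pow_nonneg (by linarith) d),
      ENNReal.toReal_ofReal (pow_nonneg hr₁.le d)]
  -- annulus volume bound
  have hannulus : (volume (A \ B)).toReal
      ≤ (d:ℝ) * 2 ^ (d - 1) * r₁ ^ (d - 1) * r₂ * V := by
    rw [hμdiff]
    have h1 : (r₁ + r₂) ^ d - r₁ ^ d ≤ (d:ℝ) * (r₁ + r₂) ^ (d - 1) * ((r₁ + r₂) - r₁) :=
      pow_sub_pow_le_aux hr₁.le (by linarith) d
    have h2 : (r₁ + r₂) ^ (d - 1) ≤ (2 * r₁) ^ (d - 1) :=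
      pow_le_pow_left₀ (by linarith) (by linarith) _
    have h3 : (2 * r₁) ^ (d - 1) = 2 ^ (d - 1) * r₁ ^ (d - 1) := mul_pow 2 r₁ (d - 1)
    have h4 : (r₁ + r₂) ^ d - r₁ ^ d ≤ (d:ℝ) * 2 ^ (d - 1) * r₁ ^ (d - 1) * r₂ := by
      have h5 : (d:ℝ) * (r₁ + r₂) ^ (d - 1) * ((r₁ + r₂) - r₁)
          = (d:ℝ) * (r₁ + r₂) ^ (d - 1) * r₂ := by ring
      have h6 : (d:ℝ) * (r₁ + r₂) ^ (d - 1) * r₂ ≤ (d:ℝ) * (2 ^ (d-1) * r₁ ^ (d-1)) * r₂ := by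
        apply mul_le_mul_of_nonneg_right _ hr₂.le
        apply mul_le_mul_of_nonneg_left _ (Nat.cast_nonneg d)
        rw [← h3]; exact h2
      calc (r₁ + r₂) ^ d - r₁ ^ d ≤ (d:ℝ) * (r₁ + r₂) ^ (d - 1) * r₂ := by rw [← h5]; exact h1
        _ ≤ (d:ℝ) * (2 ^ (d-1) * r₁ ^ (d-1)) * r₂ := h6
        _ = (d:ℝ) * 2 ^ (d - 1) * r₁ ^ (d - 1) * r₂ := by ring
    calc (r₁ + r₂) ^ d * V - r₁ ^ d * V = ((r₁ + r₂) ^ d - r₁ ^ d) * V := by ring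
      _ ≤ ((d:ℝ) * 2 ^ (d - 1) * r₁ ^ (d - 1) * r₂) * V :=
          mul_le_mul_of_nonneg_right h4 hVnn
      _ = (d:ℝ) * 2 ^ (d - 1) * r₁ ^ (d - 1) * r₂ * V := by ring
  -- final assembly
  have hS0 : 0 ≤ (volume (A \ B)).toReal := ENNReal.toReal_nonneg
  have hE : 0 < Real.exp X := Real.exp_pos X
  have hfinal : (Real.exp X - 1) * (volume (A \ B)).toReal
      ≤ (d:ℝ) * 2 ^ (d - 1) * V * r₁ ^ (d - 1) * r₂ * Real.exp X := by
    have hBnn : 0 ≤ (d:ℝ) * 2 ^ (d - 1) * r₁ ^ (d - 1) * r₂ * V :=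
      hS0.trans hannulus
    calc (Real.exp X - 1) * (volume (A \ B)).toReal
        ≤ Real.exp X * (volume (A \ B)).toReal :=
          mul_le_mul_of_nonneg_right (by linarith) hS0
      _ ≤ Real.exp X * ((d:ℝ) * 2 ^ (d - 1) * r₁ ^ (d - 1) * r₂ * V) :=
          mul_le_mul_of_nonneg_left hannulus hE.le
      _ = (d:ℝ) * 2 ^ (d - 1) * V * r₁ ^ (d - 1) * r₂ * Real.exp X := by ring
  calc (∫ y in A \ B,
        (Real.exp ((volume {z : Fin d → ℝ | nrm z ≤ r₁ ∧ nrm (z - y) ≤ r₂}).toReal) - 1))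
      ≤ ‖∫ y in A \ B,
        (Real.exp ((volume {z : Fin d → ℝ | nrm z ≤ r₁ ∧ nrm (z - y) ≤ r₂}).toReal) - 1)‖ :=
        le_abs_self _
    _ ≤ (Real.exp X - 1) * (volume (A \ B)).toReal := hint
    _ ≤ (d:ℝ) * 2 ^ (d - 1) * V * r₁ ^ (d - 1) * r₂ * Real.exp X := hfinal
end
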